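/- Let γ, Δ > 0 and let (y_{s,k})_{k≥k₀} be a real sequence. Define the sequence (y_k) by y_{k₀} = y_{s,k₀} and, for k > k₀, y_k = y_{k−1} + sat_{γΔ}(y_{s,k} − y_{k−1}), where sat_M(x) = x if |x| ≤ M and sat_M(x) = M·sign(x) otherwise. Then for each k > k₀, y_k is the unique real number satisfying the implicit relation y_k = y_{k−1} − γΔ·sign(y_k − y_{s,k}), where sign is interpreted set-valued at 0 (sign(0) ∈ [−1,1]). -/

import Mathlib

/-- Saturation function with threshold `M`. -/
noncomputable def sat (M x : ℝ) : ℝ := if |x| ≤ M then x else M * Real.sign x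

/-- Set-valued sign function: `{1}` for positive, `{-1}` for negative, `[-1,1]` at `0`. -/
noncomputable def SignSet (x : ℝ) : Set ℝ :=
  if 0 < x then {1} else if x < 0 then {-1} else Set.Icc (-1) 1

lemma sat_key (M a b : ℝ) (hM : 0 < M) :
    (∃ s ∈ SignSet (a + sat M (b - a) - b), a + sat M (b - a) = a - M * s) ∧
    (∀ z : ℝ, (∃ s ∈ SignSet (z - b), z = a - M * s) → z = a + sat M (b - a)) := by
  constructor
  · by_cases h : |b - a| ≤ M
    · have hsat : sat M (b - a) = b - a := if_pos h
      rw [hsat]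
      refine ⟨(a - b) / M, ?_, by field_simp; ring⟩
      have h0 : a + (b - a) - b = 0 := by ring
      rw [h0, SignSet, if_neg (lt_irrefl 0), if_neg (lt_irrefl 0)]
      rw [abs_le] at h
      constructor
      · rw [le_div_iff₀ hM]; linarith
      · rw [div_le_iff₀ hM]; linarith
    · push_neg at h
      have hsat : sat M (b - a) = M * Real.sign (b - a) := if_neg (not_le.mpr h)
      rcases lt_trichotomy (b - a) 0 with hneg | h0 | hpos
      · have hsgn : Real.sign (b - a) = -1 := Real.sign_of_neg hneg
        have habs : |b - a| = -(b - a) := abs_of_neg hneg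
        rw [habs] at h
        have hval : a + sat M (b - a) = a - M := by rw [hsat, hsgn]; ring
        refine ⟨1, ?_, by rw [hval]; ring⟩
        rw [hval, SignSet, if_pos (by linarith : (0:ℝ) < a - M - b)]
        rfl
      · rw [h0, abs_zero] at h; exact absurd h (not_lt.mpr hM.le)
      · have hsgn : Real.sign (b - a) = 1 := Real.sign_of_pos hpos
        have habs : |b - a| = b - a := abs_of_pos hpos
        rw [habs] at h
        have hval : a + sat M (b - a) = a + M := by rw [hsat, hsgn]; ring
        refine ⟨-1, ?_, by rw [hval]; ring⟩
        rw [hval, SignSet, if_neg (by linarith : ¬ (0:ℝ) < a + M - b),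
          if_pos (by linarith : a + M - b < 0)]
        rfl
  · rintro z ⟨s, hs, hz⟩
    rcases lt_trichotomy (z - b) 0 with hlt | heq | hgt
    · have hs1 : s = -1 := by
        rw [SignSet, if_neg (by linarith : ¬ (0:ℝ) < z - b), if_pos hlt] at hs
        exact hs
      subst hs1
      have hz' : z = a + M := by linarith
      have h1 : M < b - a := by linarith
      have h2 : ¬ |b - a| ≤ M := by rw [abs_of_pos (by linarith)]; linarith
      have hsgn : Real.sign (b - a) = 1 := Real.sign_of_pos (by linarith)
      rw [sat, if_neg h2, hsgn, hz']; ring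
    · have hzb : z = b := by linarith
      have hmem : s ∈ Set.Icc (-1 : ℝ) 1 := by
        simpa [SignSet, heq] using hs
      have hba : b - a = -(M * s) := by linarith
      have habs : |b - a| ≤ M := by
        rw [hba, abs_neg, abs_mul, abs_of_pos hM]
        have hs1 : |s| ≤ 1 := abs_le.mpr hmem
        nlinarith
      rw [sat, if_pos habs]; linarith
    · have hs1 : s = 1 := by
        rw [SignSet, if_pos hgt] at hs
        exact hs
      subst hs1
      have hz' : z = a - M := by linarith
      have h1 : b - a < -M := by linarith
      have h2 : ¬ |b - a| ≤ M := by rw [abs_of_neg (by linarith)]; linarith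
      have hsgn : Real.sign (b - a) = -1 := Real.sign_of_neg (by linarith)
      rw [sat, if_neg h2, hsgn, hz']; ring

/-- The explicit saturated update `y_k = y_{k−1} + sat_{γΔ}(y_{s,k} − y_{k−1})` is,
for each `k > k₀`, the unique solution of the implicit relation
`y_k = y_{k−1} − γΔ·sign(y_k − y_{s,k})` with set-valued sign at `0`. -/
theorem explicit_eq_implicit_discretization
    (γ Δ : ℝ) (hγ : 0 < γ) (hΔ : 0 < Δ) (k₀ : ℕ)
    (ys y : ℕ → ℝ)
    (h0 : y k₀ = ys k₀)
    (hrec : ∀ k, k₀ < k → y k = y (k - 1) + sat (γ * Δ) (ys k - y (k - 1))) :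
    ∀ k, k₀ < k →
      (∃ s ∈ SignSet (y k - ys k), y k = y (k - 1) - γ * Δ * s) ∧
      (∀ z : ℝ, (∃ s ∈ SignSet (z - ys k), z = y (k - 1) - γ * Δ * s) → z = y k) := by
  intro k hk
  have hM : 0 < γ * Δ := mul_pos hγ hΔ
  have key := sat_key (γ * Δ) (y (k - 1)) (ys k) hM
  rw [hrec k hk]
  exact key
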